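/- For every integer k ≥ 0, the subsets A = {0, 1, 3+k, 4+k, 6+k} and B = {0, 1, 2, 4+k, 7+k} of ℤ_{10+2k} (elements taken modulo 10+2k) are Z-related: they are homometric (iv(A) = iv(B)) but not dihedrally equivalent (for every t ∈ ℤ_{10+2k}, B ≠ {a + t : a ∈ A} and B ≠ {−a + t : a ∈ A}). -/
import Mathlib


/-- The interval vector of a finite subset `A` of `ℤ_M`:
`iv A n = #{(a, b) ∈ A × A : b - a = n}`. -/
def iv {M : ℕ} (A : Finset (ZMod M)) (n : ZMod M) : ℕ :=
  ((A ×ˢ A).filter (fun p => p.2 - p.1 = n)).card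

/-- The set `{0, 1, 3+k, 4+k, 6+k}` viewed in `ℤ_{10+2k}`. -/
def setA (k : ℕ) : Finset (ZMod (10 + 2 * k)) :=
  {((0 : ℕ) : ZMod (10 + 2 * k)), ((1 : ℕ) : ZMod (10 + 2 * k)),
    ((3 + k : ℕ) : ZMod (10 + 2 * k)), ((4 + k : ℕ) : ZMod (10 + 2 * k)),
    ((6 + k : ℕ) : ZMod (10 + 2 * k))}

/-- The set `{0, 1, 2, 4+k, 7+k}` viewed in `ℤ_{10+2k}`. -/
def setB (k : ℕ) : Finset (ZMod (10 + 2 * k)) :=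
  {((0 : ℕ) : ZMod (10 + 2 * k)), ((1 : ℕ) : ZMod (10 + 2 * k)),
    ((2 : ℕ) : ZMod (10 + 2 * k)), ((4 + k : ℕ) : ZMod (10 + 2 * k)),
    ((7 + k : ℕ) : ZMod (10 + 2 * k))}

lemma cast_ne' (k a b : ℕ) (ha : a < 10 + 2 * k) (hb : b < 10 + 2 * k) (h : a ≠ b) :
    ((a : ZMod (10 + 2 * k)) ≠ (b : ZMod (10 + 2 * k))) := by
  rw [Ne, ZMod.natCast_eq_natCast_iff, Nat.ModEq, Nat.mod_eq_of_lt ha, Nat.mod_eq_of_lt hb]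
  exact h

lemma key (k a b c : ℕ) (h : b = a + c ∨ b + (10 + 2 * k) = a + c) :
    ((b : ZMod (10 + 2 * k)) - (a : ZMod (10 + 2 * k)) = (c : ZMod (10 + 2 * k))) := by
  have h10 : ((10 + 2 * k : ℕ) : ZMod (10 + 2 * k)) = 0 := ZMod.natCast_self _
  rcases h with h | h
  · rw [sub_eq_iff_eq_add', ← Nat.cast_add, h]
  · have h2 : ((b + (10 + 2 * k) : ℕ) : ZMod (10 + 2 * k)) = ((a + c : ℕ) : ZMod (10 + 2 * k)) :=
      congrArg _ h
    rw [Nat.cast_add, h10, add_zero, Nat.cast_add] at h2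
    rw [sub_eq_iff_eq_add']
    exact h2

lemma notB' (k c : ℕ) (h1 : c < 10 + 2 * k) (h2 : c ≠ 0) (h3 : c ≠ 1) (h4 : c ≠ 2)
    (h5 : c ≠ 4 + k) (h6 : c ≠ 7 + k) : ((c : ℕ) : ZMod (10 + 2 * k)) ∉ setB k := by
  intro hm
  simp only [setB, Finset.mem_insert, Finset.mem_singleton] at hm
  rcases hm with h | h | h | h | h
  · exact cast_ne' k c 0 h1 (by omega) h2 h
  · exact cast_ne' k c 1 h1 (by omega) h3 h
  · exact cast_ne' k c 2 h1 (by omega) h4 h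
  · exact cast_ne' k c (4 + k) h1 (by omega) h5 h
  · exact cast_ne' k c (7 + k) h1 (by omega) h6 h

lemma shift' (k v w c : ℕ) (t : ZMod (10 + 2 * k))
    (ht : (v : ZMod (10 + 2 * k)) + t = ((0 : ℕ) : ZMod (10 + 2 * k)))
    (h : w = v + c ∨ w + (10 + 2 * k) = v + c) :
    (w : ZMod (10 + 2 * k)) + t = (c : ZMod (10 + 2 * k)) := by
  have h1 := key k v w c h
  have ht' : t = -(v : ZMod (10 + 2 * k)) := by
    rw [Nat.cast_zero] at ht
    linear_combination ht
  rw [ht', ← sub_eq_add_neg, h1]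

lemma shiftneg' (k v w c : ℕ) (t : ZMod (10 + 2 * k))
    (ht : -(v : ZMod (10 + 2 * k)) + t = ((0 : ℕ) : ZMod (10 + 2 * k)))
    (h : v = w + c ∨ v + (10 + 2 * k) = w + c) :
    -(w : ZMod (10 + 2 * k)) + t = (c : ZMod (10 + 2 * k)) := by
  have h1 := key k w v c h
  have ht' : t = (v : ZMod (10 + 2 * k)) := by
    rw [Nat.cast_zero] at ht
    linear_combination ht
  rw [ht', neg_add_eq_sub, h1]

/-- For every `k ≥ 0`, the sets `{0, 1, 3+k, 4+k, 6+k}` and `{0, 1, 2, 4+k, 7+k}`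
are Z-related in `ℤ_{10+2k}`: homometric but not dihedrally equivalent. -/
theorem zrelated_pumped_family (k : ℕ) :
    iv (setA k) = iv (setB k) ∧
    ∀ t : ZMod (10 + 2 * k),
      setB k ≠ (setA k).image (fun a => a + t) ∧
      setB k ≠ (setA k).image (fun a => -a + t) := by
  constructor
  · funext n
    have hA0 : ((0 : ℕ) : ZMod (10 + 2 * k)) ∉
        ({((1 : ℕ) : ZMod (10 + 2 * k)), ((3 + k : ℕ) : ZMod (10 + 2 * k)),
          ((4 + k : ℕ) : ZMod (10 + 2 * k)), ((6 + k : ℕ) : ZMod (10 + 2 * k))} :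
          Finset (ZMod (10 + 2 * k))) := by
      simp only [Finset.mem_insert, Finset.mem_singleton, not_or]
      exact ⟨cast_ne' k 0 1 (by omega) (by omega) (by omega),
        cast_ne' k 0 (3 + k) (by omega) (by omega) (by omega),
        cast_ne' k 0 (4 + k) (by omega) (by omega) (by omega),
        cast_ne' k 0 (6 + k) (by omega) (by omega) (by omega)⟩
    have hA1 : ((1 : ℕ) : ZMod (10 + 2 * k)) ∉
        ({((3 + k : ℕ) : ZMod (10 + 2 * k)), ((4 + k : ℕ) : ZMod (10 + 2 * k)),
          ((6 + k : ℕ) : ZMod (10 + 2 * k))} : Finset (ZMod (10 + 2 * k))) := by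
      simp only [Finset.mem_insert, Finset.mem_singleton, not_or]
      exact ⟨cast_ne' k 1 (3 + k) (by omega) (by omega) (by omega),
        cast_ne' k 1 (4 + k) (by omega) (by omega) (by omega),
        cast_ne' k 1 (6 + k) (by omega) (by omega) (by omega)⟩
    have hA2 : ((3 + k : ℕ) : ZMod (10 + 2 * k)) ∉
        ({((4 + k : ℕ) : ZMod (10 + 2 * k)), ((6 + k : ℕ) : ZMod (10 + 2 * k))} :
          Finset (ZMod (10 + 2 * k))) := by
      simp only [Finset.mem_insert, Finset.mem_singleton, not_or]
      exact ⟨cast_ne' k (3 + k) (4 + k) (by omega) (by omega) (by omega),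
        cast_ne' k (3 + k) (6 + k) (by omega) (by omega) (by omega)⟩
    have hA3 : ((4 + k : ℕ) : ZMod (10 + 2 * k)) ∉
        ({((6 + k : ℕ) : ZMod (10 + 2 * k))} : Finset (ZMod (10 + 2 * k))) := by
      simp only [Finset.mem_singleton]
      exact cast_ne' k (4 + k) (6 + k) (by omega) (by omega) (by omega)
    have hB0 : ((0 : ℕ) : ZMod (10 + 2 * k)) ∉
        ({((1 : ℕ) : ZMod (10 + 2 * k)), ((2 : ℕ) : ZMod (10 + 2 * k)),
          ((4 + k : ℕ) : ZMod (10 + 2 * k)), ((7 + k : ℕ) : ZMod (10 + 2 * k))} :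
          Finset (ZMod (10 + 2 * k))) := by
      simp only [Finset.mem_insert, Finset.mem_singleton, not_or]
      exact ⟨cast_ne' k 0 1 (by omega) (by omega) (by omega),
        cast_ne' k 0 2 (by omega) (by omega) (by omega),
        cast_ne' k 0 (4 + k) (by omega) (by omega) (by omega),
        cast_ne' k 0 (7 + k) (by omega) (by omega) (by omega)⟩
    have hB1 : ((1 : ℕ) : ZMod (10 + 2 * k)) ∉
        ({((2 : ℕ) : ZMod (10 + 2 * k)), ((4 + k : ℕ) : ZMod (10 + 2 * k)),
          ((7 + k : ℕ) : ZMod (10 + 2 * k))} : Finset (ZMod (10 + 2 * k))) := by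
      simp only [Finset.mem_insert, Finset.mem_singleton, not_or]
      exact ⟨cast_ne' k 1 2 (by omega) (by omega) (by omega),
        cast_ne' k 1 (4 + k) (by omega) (by omega) (by omega),
        cast_ne' k 1 (7 + k) (by omega) (by omega) (by omega)⟩
    have hB2 : ((2 : ℕ) : ZMod (10 + 2 * k)) ∉
        ({((4 + k : ℕ) : ZMod (10 + 2 * k)), ((7 + k : ℕ) : ZMod (10 + 2 * k))} :
          Finset (ZMod (10 + 2 * k))) := by
      simp only [Finset.mem_insert, Finset.mem_singleton, not_or]
      exact ⟨cast_ne' k 2 (4 + k) (by omega) (by omega) (by omega),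
        cast_ne' k 2 (7 + k) (by omega) (by omega) (by omega)⟩
    have hB3 : ((4 + k : ℕ) : ZMod (10 + 2 * k)) ∉
        ({((7 + k : ℕ) : ZMod (10 + 2 * k))} : Finset (ZMod (10 + 2 * k))) := by
      simp only [Finset.mem_singleton]
      exact cast_ne' k (4 + k) (7 + k) (by omega) (by omega) (by omega)
    simp only [iv, setA, setB, Finset.card_filter, Finset.sum_product,
      Finset.sum_insert hA0, Finset.sum_insert hA1, Finset.sum_insert hA2,
      Finset.sum_insert hA3, Finset.sum_insert hB0, Finset.sum_insert hB1,
      Finset.sum_insert hB2, Finset.sum_insert hB3, Finset.sum_singleton]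
    simp only [key k (0) (0) (0) (by omega),
      key k (0) (1) (1) (by omega),
      key k (0) (2) (2) (by omega),
      key k (0) (3+k) (3+k) (by omega),
      key k (0) (4+k) (4+k) (by omega),
      key k (0) (6+k) (6+k) (by omega),
      key k (0) (7+k) (7+k) (by omega),
      key k (1) (0) (9+2*k) (by omega),
      key k (1) (1) (0) (by omega),
      key k (1) (2) (1) (by omega),
      key k (1) (3+k) (2+k) (by omega),
      key k (1) (4+k) (3+k) (by omega),
      key k (1) (6+k) (5+k) (by omega),
      key k (1) (7+k) (6+k) (by omega),
      key k (2) (0) (8+2*k) (by omega),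
      key k (2) (1) (9+2*k) (by omega),
      key k (2) (2) (0) (by omega),
      key k (2) (4+k) (2+k) (by omega),
      key k (2) (7+k) (5+k) (by omega),
      key k (3+k) (0) (7+k) (by omega),
      key k (3+k) (1) (8+k) (by omega),
      key k (3+k) (3+k) (0) (by omega),
      key k (3+k) (4+k) (1) (by omega),
      key k (3+k) (6+k) (3) (by omega),
      key k (4+k) (0) (6+k) (by omega),
      key k (4+k) (1) (7+k) (by omega),
      key k (4+k) (2) (8+k) (by omega),
      key k (4+k) (3+k) (9+2*k) (by omega),
      key k (4+k) (4+k) (0) (by omega),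
      key k (4+k) (6+k) (2) (by omega),
      key k (4+k) (7+k) (3) (by omega),
      key k (6+k) (0) (4+k) (by omega),
      key k (6+k) (1) (5+k) (by omega),
      key k (6+k) (3+k) (7+2*k) (by omega),
      key k (6+k) (4+k) (8+2*k) (by omega),
      key k (6+k) (6+k) (0) (by omega),
      key k (7+k) (0) (3+k) (by omega),
      key k (7+k) (1) (4+k) (by omega),
      key k (7+k) (2) (5+k) (by omega),
      key k (7+k) (4+k) (7+2*k) (by omega),
      key k (7+k) (7+k) (0) (by omega)]
    ring
  · intro t
    constructor
    · intro hB
      have h0 : ((0 : ℕ) : ZMod (10 + 2 * k)) ∈ setB k := Finset.mem_insert_self _ _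
      rw [hB] at h0
      obtain ⟨a, ha, hat⟩ := Finset.mem_image.mp h0
      simp only [setA, Finset.mem_insert, Finset.mem_singleton] at ha
      rcases ha with rfl | rfl | rfl | rfl | rfl
      · have hw : ((3 + k : ℕ) : ZMod (10 + 2 * k)) + t = ((3 + k : ℕ) : ZMod (10 + 2 * k)) :=
          shift' k 0 (3 + k) (3 + k) t hat (by omega)
        have hmem : ((3 + k : ℕ) : ZMod (10 + 2 * k)) + t ∈ setB k := by
          rw [hB]; exact Finset.mem_image_of_mem _ (by simp [setA])
        rw [hw] at hmem
        exact notB' k (3 + k) (by omega) (by omega) (by omega) (by omega) (by omega) (by omega) hmem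
      · have hw : ((0 : ℕ) : ZMod (10 + 2 * k)) + t = ((9 + 2 * k : ℕ) : ZMod (10 + 2 * k)) :=
          shift' k 1 0 (9 + 2 * k) t hat (by omega)
        have hmem : ((0 : ℕ) : ZMod (10 + 2 * k)) + t ∈ setB k := by
          rw [hB]; exact Finset.mem_image_of_mem _ (by simp [setA])
        rw [hw] at hmem
        exact notB' k (9 + 2 * k) (by omega) (by omega) (by omega) (by omega) (by omega) (by omega) hmem
      · have hw : ((1 : ℕ) : ZMod (10 + 2 * k)) + t = ((8 + k : ℕ) : ZMod (10 + 2 * k)) :=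
          shift' k (3 + k) 1 (8 + k) t hat (by omega)
        have hmem : ((1 : ℕ) : ZMod (10 + 2 * k)) + t ∈ setB k := by
          rw [hB]; exact Finset.mem_image_of_mem _ (by simp [setA])
        rw [hw] at hmem
        exact notB' k (8 + k) (by omega) (by omega) (by omega) (by omega) (by omega) (by omega) hmem
      · have hw : ((3 + k : ℕ) : ZMod (10 + 2 * k)) + t = ((9 + 2 * k : ℕ) : ZMod (10 + 2 * k)) :=
          shift' k (4 + k) (3 + k) (9 + 2 * k) t hat (by omega)
        have hmem : ((3 + k : ℕ) : ZMod (10 + 2 * k)) + t ∈ setB k := by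
          rw [hB]; exact Finset.mem_image_of_mem _ (by simp [setA])
        rw [hw] at hmem
        exact notB' k (9 + 2 * k) (by omega) (by omega) (by omega) (by omega) (by omega) (by omega) hmem
      · have hw : ((1 : ℕ) : ZMod (10 + 2 * k)) + t = ((5 + k : ℕ) : ZMod (10 + 2 * k)) :=
          shift' k (6 + k) 1 (5 + k) t hat (by omega)
        have hmem : ((1 : ℕ) : ZMod (10 + 2 * k)) + t ∈ setB k := by
          rw [hB]; exact Finset.mem_image_of_mem _ (by simp [setA])
        rw [hw] at hmem
        exact notB' k (5 + k) (by omega) (by omega) (by omega) (by omega) (by omega) (by omega) hmem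
    · intro hB
      have h0 : ((0 : ℕ) : ZMod (10 + 2 * k)) ∈ setB k := Finset.mem_insert_self _ _
      rw [hB] at h0
      obtain ⟨a, ha, hat⟩ := Finset.mem_image.mp h0
      simp only [setA, Finset.mem_insert, Finset.mem_singleton] at ha
      rcases ha with rfl | rfl | rfl | rfl | rfl
      · have hw : -((1 : ℕ) : ZMod (10 + 2 * k)) + t = ((9 + 2 * k : ℕ) : ZMod (10 + 2 * k)) :=
          shiftneg' k 0 1 (9 + 2 * k) t hat (by omega)
        have hmem : -((1 : ℕ) : ZMod (10 + 2 * k)) + t ∈ setB k := by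
          rw [hB]; exact Finset.mem_image_of_mem _ (by simp [setA])
        rw [hw] at hmem
        exact notB' k (9 + 2 * k) (by omega) (by omega) (by omega) (by omega) (by omega) (by omega) hmem
      · have hw : -((3 + k : ℕ) : ZMod (10 + 2 * k)) + t = ((8 + k : ℕ) : ZMod (10 + 2 * k)) :=
          shiftneg' k 1 (3 + k) (8 + k) t hat (by omega)
        have hmem : -((3 + k : ℕ) : ZMod (10 + 2 * k)) + t ∈ setB k := by
          rw [hB]; exact Finset.mem_image_of_mem _ (by simp [setA])
        rw [hw] at hmem
        exact notB' k (8 + k) (by omega) (by omega) (by omega) (by omega) (by omega) (by omega) hmem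
      · have hw : -((4 + k : ℕ) : ZMod (10 + 2 * k)) + t = ((9 + 2 * k : ℕ) : ZMod (10 + 2 * k)) :=
          shiftneg' k (3 + k) (4 + k) (9 + 2 * k) t hat (by omega)
        have hmem : -((4 + k : ℕ) : ZMod (10 + 2 * k)) + t ∈ setB k := by
          rw [hB]; exact Finset.mem_image_of_mem _ (by simp [setA])
        rw [hw] at hmem
        exact notB' k (9 + 2 * k) (by omega) (by omega) (by omega) (by omega) (by omega) (by omega) hmem
      · have hw : -((1 : ℕ) : ZMod (10 + 2 * k)) + t = ((3 + k : ℕ) : ZMod (10 + 2 * k)) :=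
          shiftneg' k (4 + k) 1 (3 + k) t hat (by omega)
        have hmem : -((1 : ℕ) : ZMod (10 + 2 * k)) + t ∈ setB k := by
          rw [hB]; exact Finset.mem_image_of_mem _ (by simp [setA])
        rw [hw] at hmem
        exact notB' k (3 + k) (by omega) (by omega) (by omega) (by omega) (by omega) (by omega) hmem
      · have hw : -((1 : ℕ) : ZMod (10 + 2 * k)) + t = ((5 + k : ℕ) : ZMod (10 + 2 * k)) :=
          shiftneg' k (6 + k) 1 (5 + k) t hat (by omega)
        have hmem : -((1 : ℕ) : ZMod (10 + 2 * k)) + t ∈ setB k := by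
          rw [hB]; exact Finset.mem_image_of_mem _ (by simp [setA])
        rw [hw] at hmem
        exact notB' k (5 + k) (by omega) (by omega) (by omega) (by omega) (by omega) (by omega) hmem
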